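/- Let H(s) be a continuously differentiable family of bounded self-adjoint operators and P(s) a continuously differentiable family of orthogonal projections with [H(s), P(s)] = 0. Let U_A(s) solve i U̇_A(s) = (τ H(s) + i [Ṗ(s), P(s)]) U_A(s) with U_A(0) = 1. Then U_A(s) P(0) = P(s) U_A(s) for all s. -/

import Mathlib

lemma aux_pp'p {R : Type*} [Ring R] (Q Q' : R) (hQ : Q * Q = Q)
    (hD : Q' * Q + Q * Q' = Q') : Q * (Q' * Q) = 0 := by
  have hQ2 : ∀ x : R, Q * (Q * x) = Q * x := fun x => by rw [← mul_assoc, hQ]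
  have h := congrArg (fun X => Q * X * Q) hD
  simp only [mul_add, add_mul, mul_assoc, hQ, hQ2] at h
  exact add_eq_right.mp h

lemma aux_intertwine {R : Type*} [Ring R] [Module ℂ R] [SMulCommClass ℂ R R]
    [IsScalarTower ℂ R R]
    (c : ℂ) (Q Q' K : R) (hQ : Q * Q = Q) (hD : Q' * Q + Q * Q' = Q')
    (hK : K * Q = Q * K) :
    Q' + Q * (c • K + (Q' * Q - Q * Q')) = (c • K + (Q' * Q - Q * Q')) * Q := by
  have h0 : Q * (Q' * Q) = 0 := aux_pp'p Q Q' hQ hD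
  have hQ2 : ∀ x : R, Q * (Q * x) = Q * x := fun x => by rw [← mul_assoc, hQ]
  simp only [mul_add, add_mul, mul_sub, sub_mul, mul_smul_comm, smul_mul_assoc,
    mul_assoc, hQ, hQ2, h0, hK]
  rw [zero_sub, sub_zero]
  nth_rewrite 1 [← hD]
  abel

/-- Intertwining property of Kato's adiabatic evolution: if
`i U̇_A(s) = (τ H(s) + i [Ṗ(s),P(s)]) U_A(s)`, `U_A(0) = 1`, where `P(s)` is a
`C¹` family of orthogonal projections commuting with the `C¹` family of bounded
self-adjoint operators `H(s)`, then `U_A(s) P(0) = P(s) U_A(s)` for all `s`. -/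
theorem stmt_7 {E : Type*} [NormedAddCommGroup E] [InnerProductSpace ℂ E]
    [CompleteSpace E]
    (τ : ℝ) (hτ : 0 < τ)
    (H H' P P' UA UA' : ℝ → E →L[ℂ] E)
    (hHsa : ∀ s, IsSelfAdjoint (H s))
    (hHderiv : ∀ s, HasDerivAt H (H' s) s) (hH'cont : Continuous H')
    (hPproj : ∀ s, P s * P s = P s) (hPsa : ∀ s, IsSelfAdjoint (P s))
    (hPderiv : ∀ s, HasDerivAt P (P' s) s) (hP'cont : Continuous P')
    (hcomm : ∀ s, H s * P s = P s * H s)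
    (hUA0 : UA 0 = 1)
    (hUAderiv : ∀ s, HasDerivAt UA (UA' s) s)
    (hUAeq : ∀ s, Complex.I • UA' s =
      ((τ : ℂ) • H s + Complex.I • (P' s * P s - P s * P' s)) * UA s) :
    ∀ s, UA s * P 0 = P s * UA s := by
  set c : ℂ := -(Complex.I * (τ : ℂ)) with hc
  set A : ℝ → E →L[ℂ] E := fun s => c • H s + (P' s * P s - P s * P' s) with hA
  -- continuity of the families
  have hPcont : Continuous P := continuous_iff_continuousAt.mpr fun s => (hPderiv s).continuousAt
  have hHcont : Continuous H := continuous_iff_continuousAt.mpr fun s => (hHderiv s).continuousAt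
  have hUAcont : Continuous UA := continuous_iff_continuousAt.mpr fun s => (hUAderiv s).continuousAt
  have hAcont : Continuous A := by
    exact ((continuous_const : Continuous fun _ : ℝ => c).smul hHcont).add ((hP'cont.mul hPcont).sub (hPcont.mul hP'cont))
  -- the evolution equation, rewritten
  have hUA' : ∀ s, UA' s = A s * UA s := by
    intro s
    have h1 : UA' s = (-Complex.I) • (Complex.I • UA' s) := by
      rw [smul_smul, neg_mul, Complex.I_mul_I, neg_neg, one_smul]
    rw [h1, hUAeq s, ← smul_mul_assoc]
    congr 1
    simp only [hA, smul_add, smul_smul]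
    congr 1
    · congr 1
      rw [hc]; ring
    · have h2 : -Complex.I * Complex.I = 1 := by simp [Complex.I_mul_I]
      rw [h2, one_smul]
  -- derivative of P^2 = P
  have hD : ∀ s, P' s * P s + P s * P' s = P' s := by
    intro s
    have h1 : HasDerivAt (fun t => P t * P t) (P' s * P s + P s * P' s) s :=
      (hPderiv s).mul (hPderiv s)
    have h2 : (fun t => P t * P t) = P := funext hPproj
    rw [h2] at h1
    exact h1.unique (hPderiv s)
  have hkey : ∀ s, P' s + P s * A s = A s * P s := fun s =>
    aux_intertwine c (P s) (P' s) (H s) (hPproj s) (hD s) (hcomm s)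
  intro s₀
  set b : ℝ := |s₀| + 1 with hb
  have hbpos : 0 < b := by positivity
  have h0mem : (0 : ℝ) ∈ Set.Ioo (-b) b := ⟨by linarith, hbpos⟩
  have hs₀mem : s₀ ∈ Set.Icc (-b) b := by
    constructor
    · have := neg_abs_le s₀; linarith
    · have := le_abs_self s₀; linarith
  set clamp : ℝ → ℝ := fun t => max (-b) (min t b) with hclamp
  have hclamp_mem : ∀ t, clamp t ∈ Set.Icc (-b) b := by
    intro t
    refine ⟨le_max_left _ _, max_le (by linarith) (min_le_right _ _)⟩
  have hclamp_id : ∀ t ∈ Set.Icc (-b) b, clamp t = t := by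
    intro t ht
    simp only [hclamp]
    rw [min_eq_left ht.2, max_eq_right ht.1]
  obtain ⟨C, hC⟩ := (isCompact_Icc (a := -b) (b := b)).exists_bound_of_continuousOn
    hAcont.continuousOn
  set K : NNReal := C.toNNReal with hK
  have hv : ∀ t, LipschitzOnWith K (fun x : E →L[ℂ] E => A (clamp t) * x) Set.univ := by
    intro t
    apply LipschitzWith.lipschitzOnWith
    apply LipschitzWith.of_dist_le_mul
    intro x y
    rw [dist_eq_norm, dist_eq_norm, ← mul_sub]
    calc ‖A (clamp t) * (x - y)‖ ≤ ‖A (clamp t)‖ * ‖x - y‖ := norm_mul_le _ _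
      _ ≤ (K : ℝ) * ‖x - y‖ := by
          apply mul_le_mul_of_nonneg_right _ (norm_nonneg _)
          exact (hC _ (hclamp_mem t)).trans (Real.le_coe_toNNReal C)
  set f : ℝ → E →L[ℂ] E := fun t => P t * UA t - UA t * P 0 with hf
  have hfcont : ContinuousOn f (Set.Icc (-b) b) :=
    ((hPcont.mul hUAcont).sub (hUAcont.mul continuous_const)).continuousOn
  have hf' : ∀ t ∈ Set.Ioo (-b) b, HasDerivAt f (A (clamp t) * f t) t := by
    intro t ht
    have hd : HasDerivAt f (P' t * UA t + P t * UA' t - UA' t * P 0) t :=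
      ((hPderiv t).mul (hUAderiv t)).sub ((hUAderiv t).mul_const (P 0))
    have heq : A (clamp t) * f t = P' t * UA t + P t * UA' t - UA' t * P 0 := by
      rw [hclamp_id t (Set.Ioo_subset_Icc_self ht)]
      simp only [hf]
      rw [mul_sub, ← mul_assoc, ← hkey t, add_mul, mul_assoc, ← hUA' t,
        ← mul_assoc, ← hUA' t]
    rw [heq]
    exact hd
  have hg' : ∀ t ∈ Set.Ioo (-b) b,
      HasDerivAt (fun _ : ℝ => (0 : E →L[ℂ] E)) (A (clamp t) * 0) t := by
    intro t _
    rw [mul_zero]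
    exact hasDerivAt_const _ _
  have hfeq0 : f 0 = (fun _ : ℝ => (0 : E →L[ℂ] E)) 0 := by
    simp only [hf, hUA0, mul_one, one_mul, sub_self]
  have huniq := ODE_solution_unique_of_mem_Icc (v := fun t x => A (clamp t) * x)
    (s := fun _ => Set.univ) (fun t _ => hv t) h0mem hfcont hf' (fun _ _ => trivial)
    continuousOn_const hg' (fun _ _ => trivial) hfeq0
  have hzero : f s₀ = 0 := huniq hs₀mem
  have := sub_eq_zero.mp hzero
  exact this.symm
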